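/- Assume n ≥ 1 and let ω = Σ_{i,j=1}^n A_{ij} ψ_j·φ_i in the exterior algebra Λ of R^{2n}. Then for every index k (1 ≤ k ≤ n), (ψ_k·φ_k)·ω^{n−1} = (n−1)! · det(A^{(k)}) · (ψ₁·φ₁·⋯·ψ_n·φ_n), where A^{(k)} is the (n−1)×(n−1) matrix obtained from A by deleting its k-th row and k-th column. (This is the fermionic-integral identity (A.32) of the paper, ∫ ψ⁺_k ψ⁻_k exp(Σ A_{ij} ψ⁺_j ψ⁻_i) dψ = det of the (k,k)-minor, used to obtain the principal-minor determinant in the Alexander polynomial formula.) -/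

import Mathlib

open ExteriorAlgebra

/-- The odd generator `ψᵢ` of the exterior algebra of `R^{2n} = (Fin n → R) × (Fin n → R)`:
the image of the `i`-th standard basis vector of the first factor. -/
noncomputable def fermionPsi {R : Type*} [CommRing R] {n : ℕ} (i : Fin n) :
    ExteriorAlgebra R ((Fin n → R) × (Fin n → R)) :=
  ExteriorAlgebra.ι R ((Pi.single i 1 : Fin n → R), 0)

/-- The odd generator `φᵢ` of the exterior algebra of `R^{2n} = (Fin n → R) × (Fin n → R)`:
the image of the `i`-th standard basis vector of the second factor. -/
noncomputable def fermionPhi {R : Type*} [CommRing R] {n : ℕ} (i : Fin n) :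
    ExteriorAlgebra R ((Fin n → R) × (Fin n → R)) :=
  ExteriorAlgebra.ι R (0, (Pi.single i 1 : Fin n → R))

namespace FermionAux

variable {R : Type*} [CommRing R] {M : Type*} [AddCommGroup M] [Module R M]

lemma ferm_anticomm (x y : M) :
    ι R x * ι R y = - (ι R y * ι R x) :=
  eq_neg_of_add_eq_zero_left (ExteriorAlgebra.ι_add_mul_swap x y)

lemma ferm_move (x : M) : ∀ {m : ℕ} (v : Fin m → M),
    ι R x * (List.ofFn fun t => ι R (v t)).prod
      = ((-1 : ℤ) ^ m) • ((List.ofFn fun t => ι R (v t)).prod * ι R x) := by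
  intro m
  induction m with
  | zero => intro v; simp
  | succ m ih =>
    intro v
    rw [List.ofFn_succ, List.prod_cons, ← mul_assoc, ferm_anticomm x (v 0), neg_mul,
      mul_assoc, ih (fun t => v t.succ)]
    simp only [mul_smul_comm, ← neg_smul, pow_succ, mul_neg_one, mul_assoc]

lemma ferm_move' (x : M) {m : ℕ} (v : Fin m → M) :
    (List.ofFn fun t => ι R (v t)).prod * ι R x
      = ((-1 : ℤ) ^ m) • (ι R x * (List.ofFn fun t => ι R (v t)).prod) := by
  rw [ferm_move x v, smul_smul, ← pow_add]
  rw [Even.neg_one_pow ⟨m, by ring⟩, one_smul]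

/-- Regrouping an interleaved product of odd generators. -/
lemma ferm_regroup : ∀ {m : ℕ} (u w : Fin m → M),
    (List.ofFn fun s => ι R (u s) * ι R (w s)).prod
      = ((-1 : ℤ) ^ m.choose 2) •
          ((List.ofFn fun s => ι R (u s)).prod * (List.ofFn fun s => ι R (w s)).prod) := by
  intro m
  induction m with
  | zero => intro u w; simp
  | succ m ih =>
    intro u w
    set U := (List.ofFn fun t => ι R (u t.succ)).prod with hU
    set W := (List.ofFn fun t => ι R (w t.succ)).prod with hW
    have key : U * ι R (w 0) = ((-1 : ℤ) ^ m) • (ι R (w 0) * U) :=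
      ferm_move' (w 0) (fun t => u t.succ)
    have hch : (m + 1).choose 2 = m.choose 2 + m := by
      rw [Nat.choose_succ_succ, Nat.choose_one_right, Nat.add_comm]
    have expand : (ι R (u 0) * U) * (ι R (w 0) * W)
        = ((-1 : ℤ) ^ m) • (ι R (u 0) * ι R (w 0) * (U * W)) := by
      calc (ι R (u 0) * U) * (ι R (w 0) * W)
          = ι R (u 0) * ((U * ι R (w 0)) * W) := by simp only [mul_assoc]
        _ = ι R (u 0) * ((((-1 : ℤ) ^ m) • (ι R (w 0) * U)) * W) := by rw [key]
        _ = ((-1 : ℤ) ^ m) • (ι R (u 0) * ι R (w 0) * (U * W)) := by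
            simp only [smul_mul_assoc, mul_smul_comm, mul_assoc]
    have hone : ((-1 : ℤ) ^ m) * ((-1 : ℤ) ^ m) = 1 := by
      rw [← pow_add]; exact Even.neg_one_pow ⟨m, by ring⟩
    rw [List.ofFn_succ, List.prod_cons]
    rw [show (List.ofFn fun s => ι R (u s.succ) * ι R (w s.succ)).prod
        = ((-1 : ℤ) ^ m.choose 2) • (U * W) from ih (fun t => u t.succ) (fun t => w t.succ)]
    rw [List.ofFn_succ (f := fun s => ι R (u s)), List.prod_cons,
      List.ofFn_succ (f := fun s => ι R (w s)), List.prod_cons, ← hU, ← hW]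
    rw [expand, hch, pow_add, smul_smul,
      mul_assoc ((-1 : ℤ) ^ m.choose 2) ((-1 : ℤ) ^ m) ((-1 : ℤ) ^ m), hone, mul_one,
      mul_smul_comm]

/-- A module-valued alternating map in top degree is det times its value on a basis. -/
lemma alt_eq_det_smul {ι : Type*} [Fintype ι] [DecidableEq ι]
    {N : Type*} [AddCommGroup N] [Module R N]
    (e : Module.Basis ι R M) (f : M [⋀^ι]→ₗ[R] N) (v : ι → M) :
    f v = e.det v • f e := by
  have h : f = (e.det).smulRight (f e) := by
    refine Module.Basis.ext_alternating e fun i hi => ?_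
    let σ : Equiv.Perm ι := Equiv.ofBijective i (Finite.injective_iff_bijective.1 hi)
    have hfun : (fun j => e (i j)) = ⇑e ∘ σ := rfl
    rw [hfun, AlternatingMap.map_perm, AlternatingMap.smulRight_apply,
      AlternatingMap.map_perm, Module.Basis.det_self]
    simp [Units.smul_def, Int.cast_smul_eq_zsmul]
  conv_lhs => rw [h]
  simp [AlternatingMap.smulRight_apply]

end FermionAux

namespace FermionDet

variable {R : Type*} [CommRing R] {n : ℕ}

lemma units_smul_mul_units_smul (u : ℤˣ) (a b : R) :
    (u • a) * (u • b) = a * b := by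
  rcases Int.units_eq_one_or u with h | h <;>
    simp [h, Units.smul_def]

lemma cons_eq_comp_perm {α : Type*} (σ : Equiv.Perm (Fin n)) (x : α) (g : Fin n → α) :
    Fin.cons x (fun t => g (σ t)) =
      (Fin.cons x g : Fin (n + 1) → α) ∘ ⇑(Equiv.Perm.decomposeFin.symm (0, σ)) := by
  funext s
  induction s using Fin.cases with
  | zero => simp
  | succ t => simp [Equiv.swap_self]

lemma cons_succAbove_eq_cycleRange_inv (k : Fin (n + 1)) :
    (Fin.cons k k.succAbove : Fin (n + 1) → Fin (n + 1)) = ⇑(k.cycleRange⁻¹) := by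
  funext s
  symm
  rw [Equiv.Perm.inv_eq_iff_eq]
  induction s using Fin.cases with
  | zero => simp
  | succ t => simp

lemma det_cons_single (A : Matrix (Fin (n + 1)) (Fin (n + 1)) R) (k : Fin (n + 1)) :
    (Pi.basisFun R (Fin (n + 1))).det
        (Fin.cons (Pi.single k 1) (fun t => A (k.succAbove t)))
      = (-1 : R) ^ (k : ℕ) * (A.submatrix k.succAbove k.succAbove).det := by
  set e := Pi.basisFun R (Fin (n + 1))
  set v : Fin (n + 1) → (Fin (n + 1) → R) :=
    Fin.cons (Pi.single k 1) (fun t => A (k.succAbove t)) with hv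
  have hm : e.toMatrix v = (Matrix.of v).transpose := by
    ext i j
    simp [e, Module.Basis.toMatrix_apply, Matrix.transpose_apply]
  rw [Module.Basis.det_apply, hm, Matrix.det_transpose, Matrix.det_succ_row_zero]
  rw [Finset.sum_eq_single k]
  · have h0 : Matrix.of v 0 k = 1 := by simp [hv]
    have hsub : (Matrix.of v).submatrix Fin.succ k.succAbove
        = A.submatrix k.succAbove k.succAbove := by
      ext t s
      simp [hv, Matrix.submatrix_apply]
    rw [h0, hsub, mul_one]
  · intro j _ hj
    have : Matrix.of v 0 j = 0 := by simp [hv, Pi.single_eq_of_ne hj]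
    rw [this, mul_zero, zero_mul]
  · intro h; exact absurd (Finset.mem_univ k) h

lemma sum_det_mul_det (A : Matrix (Fin (n + 1)) (Fin (n + 1)) R) (k : Fin (n + 1)) :
    (∑ r : Fin n → Fin (n + 1),
      (Pi.basisFun R (Fin (n + 1))).det (Fin.cons (Pi.single k 1) (fun t => A (r t))) *
        (Pi.basisFun R (Fin (n + 1))).det
          (fun s => (Pi.single ((Fin.cons k r : Fin (n + 1) → Fin (n + 1)) s) 1
            : Fin (n + 1) → R)))
      = (n.factorial : R) * (A.submatrix k.succAbove k.succAbove).det := by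
  classical
  set e := Pi.basisFun R (Fin (n + 1)) with he
  set term : (Fin n → Fin (n + 1)) → R := fun r =>
    e.det (Fin.cons (Pi.single k 1) (fun t => A (r t))) *
      e.det (fun s => (Pi.single ((Fin.cons k r : Fin (n + 1) → Fin (n + 1)) s) 1
        : Fin (n + 1) → R)) with hterm
  have hbase : ∀ c : Fin (n + 1) → Fin (n + 1),
      (fun s => (Pi.single (c s) 1 : Fin (n + 1) → R)) = ⇑e ∘ c := by
    intro c; funext s; simp [he]
  have hzero : ∀ r : Fin n → Fin (n + 1), ¬ Function.Injective (Fin.cons k r) → term r = 0 := by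
    intro r hr
    have h2 : e.det (fun s => (Pi.single ((Fin.cons k r : Fin (n + 1) → Fin (n + 1)) s) 1
        : Fin (n + 1) → R)) = 0 := by
      rw [hbase]
      exact AlternatingMap.map_eq_zero_of_not_injective _ _
        (mt Function.Injective.of_comp hr)
    simp [hterm, h2]
  have hstep1 : (∑ r : Fin n → Fin (n + 1), term r)
      = ∑ r ∈ Finset.univ.filter (fun r => Function.Injective (Fin.cons k r)), term r := by
    refine (Finset.sum_filter_of_ne ?_).symm
    intro r _ hne
    by_contra h
    exact hne (hzero r h)
  have hval : ∀ σ : Equiv.Perm (Fin n),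
      term (fun t => k.succAbove (σ t))
        = (A.submatrix k.succAbove k.succAbove).det := by
    intro σ
    set π := Equiv.Perm.decomposeFin.symm (0, σ) with hπ
    have hsign : Equiv.Perm.sign π = Equiv.Perm.sign σ := by simp [hπ]
    have h1 : (Fin.cons (Pi.single k 1) (fun t => A (k.succAbove (σ t)))
          : Fin (n + 1) → (Fin (n + 1) → R))
        = (Fin.cons (Pi.single k 1) (fun t => A (k.succAbove t))) ∘ ⇑π :=
      cons_eq_comp_perm σ _ (fun t => A (k.succAbove t))
    have h2 : (Fin.cons k (fun t => k.succAbove (σ t)) : Fin (n + 1) → Fin (n + 1))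
        = (Fin.cons k k.succAbove) ∘ ⇑π :=
      cons_eq_comp_perm σ k k.succAbove
    have e1 : e.det (Fin.cons (Pi.single k 1) (fun t => A (k.succAbove (σ t))))
        = Equiv.Perm.sign σ •
            e.det (Fin.cons (Pi.single k 1) (fun t => A (k.succAbove t))) := by
      rw [h1, AlternatingMap.map_perm, hsign]
    have e2 : e.det (fun s =>
          (Pi.single ((Fin.cons k (fun t => k.succAbove (σ t))
            : Fin (n + 1) → Fin (n + 1)) s) 1 : Fin (n + 1) → R))
        = Equiv.Perm.sign σ •
            e.det (fun s => (Pi.single ((Fin.cons k k.succAbove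
              : Fin (n + 1) → Fin (n + 1)) s) 1 : Fin (n + 1) → R)) := by
      rw [hbase, hbase, h2]
      have : ⇑e ∘ (Fin.cons k k.succAbove ∘ ⇑π) = (⇑e ∘ Fin.cons k k.succAbove) ∘ ⇑π := rfl
      rw [this, AlternatingMap.map_perm, hsign]
    have hd2 : e.det (fun s => (Pi.single ((Fin.cons k k.succAbove
          : Fin (n + 1) → Fin (n + 1)) s) 1 : Fin (n + 1) → R))
        = ((-1 : ℤˣ) ^ (k : ℕ)) • (1 : R) := by
      rw [hbase, cons_succAbove_eq_cycleRange_inv]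
      rw [show (⇑e ∘ ⇑(k.cycleRange⁻¹)) = ⇑e ∘ ⇑(k.cycleRange⁻¹) from rfl,
        AlternatingMap.map_perm, Module.Basis.det_self]
      congr 1
      rw [map_inv, Fin.sign_cycleRange]
      simp
    have hd1 := det_cons_single A k
    rw [hterm]
    simp only [e1, e2]
    rw [units_smul_mul_units_smul, hd1, hd2]
    have hcast : ((-1 : ℤˣ) ^ (k : ℕ)) • (1 : R) = (-1 : R) ^ (k : ℕ) := by
      rcases Nat.even_or_odd (k : ℕ) with h | h
      · simp [h.neg_one_pow, Even.neg_one_pow h]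
      · simp [h.neg_one_pow, Odd.neg_one_pow h]
    rw [hcast]
    have hone : (-1 : R) ^ (k : ℕ) * (-1 : R) ^ (k : ℕ) = 1 := by
      rw [← pow_add]; exact Even.neg_one_pow ⟨(k : ℕ), by ring⟩
    calc (-1 : R) ^ (k : ℕ) * (A.submatrix k.succAbove k.succAbove).det * (-1 : R) ^ (k : ℕ)
        = ((-1 : R) ^ (k : ℕ) * (-1 : R) ^ (k : ℕ)) *
            (A.submatrix k.succAbove k.succAbove).det := by ring
      _ = (A.submatrix k.succAbove k.succAbove).det := by rw [hone, one_mul]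
  have hstep2 : (∑ _σ : Equiv.Perm (Fin n), (A.submatrix k.succAbove k.succAbove).det)
      = ∑ r ∈ Finset.univ.filter (fun r => Function.Injective (Fin.cons k r)), term r := by
    refine Finset.sum_bij (fun σ _ => fun t => k.succAbove (σ t)) ?_ ?_ ?_ ?_
    · intro σ _
      rw [Finset.mem_filter]
      refine ⟨Finset.mem_univ _, ?_⟩
      rw [Fin.cons_injective_iff]
      constructor
      · rintro ⟨t, ht⟩
        exact Fin.succAbove_ne k (σ t) ht
      · exact Fin.succAbove_right_injective.comp σ.injective
    · intro σ _ σ' _ h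
      ext t
      exact congrArg Fin.val (Fin.succAbove_right_injective (congrFun h t))
    · intro r hr
      rw [Finset.mem_filter] at hr
      have hinj := hr.2
      have hne : ∀ t, r t ≠ k := by
        intro t h
        have h0 : (Fin.cons k r : Fin (n + 1) → Fin (n + 1)) t.succ
            = (Fin.cons k r : Fin (n + 1) → Fin (n + 1)) 0 := by
          simp [h]
        exact Fin.succ_ne_zero t (hinj h0)
      choose g hg using fun t => Fin.exists_succAbove_eq (Ne.symm (hne t)).symm
      have hrinj : Function.Injective r := by
        have hr' : r = (Fin.cons k r : Fin (n + 1) → Fin (n + 1)) ∘ Fin.succ := by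
          funext t; simp
        rw [hr']
        exact hinj.comp (Fin.succ_injective n)
      have hginj : Function.Injective g := by
        intro a b hab
        apply hrinj
        rw [← hg a, ← hg b, hab]
      refine ⟨Equiv.ofBijective g (Finite.injective_iff_bijective.1 hginj),
        Finset.mem_univ _, ?_⟩
      funext t
      exact hg t
    · intro σ _
      exact (hval σ).symm
  rw [hstep1, ← hstep2, Finset.sum_const, Finset.card_univ, Fintype.card_perm,
    Fintype.card_fin, nsmul_eq_mul]

end FermionDet

set_option maxHeartbeats 2000000 in
set_option synthInstance.maxHeartbeats 400000 in
/-- Fermionic integral with an insertion: with `ω = Σ_{i,j} A_{ij} ψ_j φ_i` in the exterior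
algebra of `R^{2(n+1)}`, for any index `k` one has
`(ψ_k φ_k) ω^n = n! · det A^{(k)} · ψ₁φ₁⋯ψ_{n+1}φ_{n+1}`, where `A^{(k)}` is the matrix
obtained from `A` by deleting its `k`-th row and `k`-th column. -/
theorem psi_phi_mul_omega_pow_eq_minor_det_smul
    {R : Type*} [CommRing R] {n : ℕ} (A : Matrix (Fin (n + 1)) (Fin (n + 1)) R)
    (k : Fin (n + 1)) :
    (fermionPsi (R := R) k * fermionPhi k) *
        (∑ i : Fin (n + 1), ∑ j : Fin (n + 1), A i j • (fermionPsi j * fermionPhi i)) ^ n =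
      (Nat.factorial n : R) • (A.submatrix (Fin.succAbove k) (Fin.succAbove k)).det •
        ((List.finRange (n + 1)).map (fun i => fermionPsi (R := R) i * fermionPhi i)).prod := by
  classical
  obtain ⟨e, he⟩ : ∃ e : Module.Basis (Fin (n + 1)) R (Fin (n + 1) → R),
      e = Pi.basisFun R (Fin (n + 1)) := ⟨_, rfl⟩
  obtain ⟨G, hG⟩ : ∃ G : (Fin (n + 1) → R) [⋀^Fin (n + 1)]→ₗ[R]
        ExteriorAlgebra R (((Fin (n + 1) → R) × (Fin (n + 1) → R))),
      G = (ExteriorAlgebra.ιMulti R (n + 1)).compLinearMap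
        (LinearMap.inl R (Fin (n + 1) → R) (Fin (n + 1) → R)) := ⟨_, rfl⟩
  obtain ⟨H, hH⟩ : ∃ H : (Fin (n + 1) → R) [⋀^Fin (n + 1)]→ₗ[R]
        ExteriorAlgebra R (((Fin (n + 1) → R) × (Fin (n + 1) → R))),
      H = (ExteriorAlgebra.ιMulti R (n + 1)).compLinearMap
        (LinearMap.inr R (Fin (n + 1) → R) (Fin (n + 1) → R)) := ⟨_, rfl⟩
  have hGapp : ∀ v : Fin (n + 1) → (Fin (n + 1) → R),
      (List.ofFn fun s => ι R ((v s, 0) : ((Fin (n + 1) → R) × (Fin (n + 1) → R)))).prod = G v := by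
    intro v
    rw [hG, AlternatingMap.compLinearMap_apply, ExteriorAlgebra.ιMulti_apply]
    rfl
  have hHapp : ∀ v : Fin (n + 1) → (Fin (n + 1) → R),
      (List.ofFn fun s => ι R ((0, v s) : ((Fin (n + 1) → R) × (Fin (n + 1) → R)))).prod = H v := by
    intro v
    rw [hH, AlternatingMap.compLinearMap_apply, ExteriorAlgebra.ιMulti_apply]
    rfl
  -- the big product ψ₁φ₁⋯
  obtain ⟨Z, hZ⟩ : ∃ Z : ExteriorAlgebra R (((Fin (n + 1) → R) × (Fin (n + 1) → R))),
      Z = ((-1 : ℤ) ^ (n + 1).choose 2) • (G ⇑e * H ⇑e) := ⟨_, rfl⟩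
  have hbasis : ⇑e = fun s : Fin (n + 1) => (Pi.single s 1 : Fin (n + 1) → R) := by
    funext s; rw [he]; simp [Pi.basisFun_apply]
  have hRHS : ((List.finRange (n + 1)).map
      (fun i => fermionPsi (R := R) i * fermionPhi i)).prod = Z := by
    rw [← List.ofFn_eq_map]
    calc (List.ofFn fun s => fermionPsi (R := R) s * fermionPhi s).prod
        = (List.ofFn fun s => ι R (((Pi.single s 1 : Fin (n + 1) → R), (0 : Fin (n + 1) → R)) : ((Fin (n + 1) → R) × (Fin (n + 1) → R)))
            * ι R (((0 : Fin (n + 1) → R), (Pi.single s 1 : Fin (n + 1) → R)) : ((Fin (n + 1) → R) × (Fin (n + 1) → R)))).prod := rfl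
      _ = ((-1 : ℤ) ^ (n + 1).choose 2) •
            ((List.ofFn fun s => ι R (((Pi.single s 1 : Fin (n + 1) → R), (0 : Fin (n + 1) → R)) : ((Fin (n + 1) → R) × (Fin (n + 1) → R)))).prod *
             (List.ofFn fun s => ι R (((0 : Fin (n + 1) → R), (Pi.single s 1 : Fin (n + 1) → R)) : ((Fin (n + 1) → R) × (Fin (n + 1) → R)))).prod) :=
          FermionAux.ferm_regroup _ _
      _ = Z := by
          rw [hZ, hGapp (fun s => (Pi.single s 1 : Fin (n + 1) → R)), hHapp (fun s => (Pi.single s 1 : Fin (n + 1) → R)),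
            hbasis]
  -- rewrite ω
  have hω : (∑ i : Fin (n + 1), ∑ j : Fin (n + 1),
        A i j • (fermionPsi (R := R) j * fermionPhi i))
      = ∑ i : Fin (n + 1), ι R (((A i : Fin (n + 1) → R), (0 : Fin (n + 1) → R)) : ((Fin (n + 1) → R) × (Fin (n + 1) → R))) * fermionPhi i := by
    refine Finset.sum_congr rfl fun i _ => ?_
    have hs : ∑ j : Fin (n + 1), A i j • (fermionPsi (R := R) j * fermionPhi i)
        = (∑ j : Fin (n + 1), A i j • fermionPsi (R := R) j) * fermionPhi i := by
      rw [Finset.sum_mul]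
      simp [smul_mul_assoc]
    rw [hs]
    congr 1
    have h1 : ∑ j : Fin (n + 1), A i j • fermionPsi (R := R) j
        = ι R (∑ j : Fin (n + 1), A i j • (((Pi.single j 1 : Fin (n + 1) → R), (0 : Fin (n + 1) → R)) : ((Fin (n + 1) → R) × (Fin (n + 1) → R)))) := by
      rw [map_sum]
      refine Finset.sum_congr rfl fun j _ => ?_
      rw [map_smul]
      rfl
    rw [h1]
    congr 1
    have hfst : (∑ j : Fin (n + 1), A i j • (((Pi.single j 1 : Fin (n + 1) → R), (0 : Fin (n + 1) → R)) : ((Fin (n + 1) → R) × (Fin (n + 1) → R))))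
        = ((∑ j : Fin (n + 1), A i j • (Pi.single j 1 : Fin (n + 1) → R), (0 : Fin (n + 1) → R)) : ((Fin (n + 1) → R) × (Fin (n + 1) → R))) := by
      rw [Prod.ext_iff]
      constructor
      · simp [Prod.fst_sum]
      · simp [Prod.snd_sum]
    rw [hfst]
    congr 1
    funext l
    simp [Pi.single_apply]
  rw [hω]
  -- expand the power
  have hpow : (∑ i : Fin (n + 1), ι R (((A i : Fin (n + 1) → R), (0 : Fin (n + 1) → R)) : ((Fin (n + 1) → R) × (Fin (n + 1) → R))) * fermionPhi i) ^ n
      = ∑ r : Fin n → Fin (n + 1),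
          (List.ofFn fun t => ι R (((A (r t) : Fin (n + 1) → R), (0 : Fin (n + 1) → R)) : ((Fin (n + 1) → R) × (Fin (n + 1) → R))) * fermionPhi (r t)).prod := by
    calc (∑ i : Fin (n + 1), ι R (((A i : Fin (n + 1) → R), (0 : Fin (n + 1) → R)) : ((Fin (n + 1) → R) × (Fin (n + 1) → R))) * fermionPhi i) ^ n
        = MultilinearMap.mkPiAlgebraFin R n (ExteriorAlgebra R (((Fin (n + 1) → R) × (Fin (n + 1) → R))))
            (fun _ => ∑ i : Fin (n + 1), ι R (((A i : Fin (n + 1) → R), (0 : Fin (n + 1) → R)) : ((Fin (n + 1) → R) × (Fin (n + 1) → R))) * fermionPhi i) :=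
          (MultilinearMap.mkPiAlgebraFin_apply_const _).symm
      _ = ∑ r : Fin n → Fin (n + 1), MultilinearMap.mkPiAlgebraFin R n (ExteriorAlgebra R (((Fin (n + 1) → R) × (Fin (n + 1) → R))))
            (fun t => ι R (((A (r t) : Fin (n + 1) → R), (0 : Fin (n + 1) → R)) : ((Fin (n + 1) → R) × (Fin (n + 1) → R))) * fermionPhi (r t)) :=
          MultilinearMap.map_sum _ _
      _ = _ := by
          refine Finset.sum_congr rfl fun r _ => ?_
          rw [MultilinearMap.mkPiAlgebraFin_apply]
  rw [hpow, Finset.mul_sum]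
  -- evaluate each summand
  have hterm : ∀ r : Fin n → Fin (n + 1),
      (fermionPsi (R := R) k * fermionPhi k) *
          (List.ofFn fun t => ι R (((A (r t) : Fin (n + 1) → R), (0 : Fin (n + 1) → R)) : ((Fin (n + 1) → R) × (Fin (n + 1) → R))) * fermionPhi (r t)).prod
        = (e.det (Fin.cons (Pi.single k 1) (fun t => A (r t))) *
            e.det (fun s => (Pi.single ((Fin.cons k r : Fin (n + 1) → Fin (n + 1)) s) 1
              : Fin (n + 1) → R))) • Z := by
    intro r
    have hlist : (fermionPsi (R := R) k * fermionPhi k) *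
          (List.ofFn fun t => ι R (((A (r t) : Fin (n + 1) → R), (0 : Fin (n + 1) → R)) : ((Fin (n + 1) → R) × (Fin (n + 1) → R))) * fermionPhi (r t)).prod
        = (List.ofFn fun s : Fin (n + 1) =>
            ι R ((((Fin.cons (Pi.single k 1) (fun t => A (r t)) : Fin (n + 1) → (Fin (n + 1) → R)) s),
              (0 : Fin (n + 1) → R)) : ((Fin (n + 1) → R) × (Fin (n + 1) → R))) *
            ι R (((0 : Fin (n + 1) → R), (Pi.single ((Fin.cons k r : Fin (n + 1) → Fin (n + 1)) s) 1 : Fin (n + 1) → R))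
              : ((Fin (n + 1) → R) × (Fin (n + 1) → R)))).prod := by
      rw [List.ofFn_succ, List.prod_cons]
      simp only [Fin.cons_zero, Fin.cons_succ]
      rfl
    rw [hlist]
    calc (List.ofFn fun s : Fin (n + 1) =>
            ι R ((((Fin.cons (Pi.single k 1) (fun t => A (r t)) : Fin (n + 1) → (Fin (n + 1) → R)) s),
              (0 : Fin (n + 1) → R)) : ((Fin (n + 1) → R) × (Fin (n + 1) → R))) *
            ι R (((0 : Fin (n + 1) → R), (Pi.single ((Fin.cons k r : Fin (n + 1) → Fin (n + 1)) s) 1 : Fin (n + 1) → R))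
              : ((Fin (n + 1) → R) × (Fin (n + 1) → R)))).prod
        = ((-1 : ℤ) ^ (n + 1).choose 2) •
            ((List.ofFn fun s : Fin (n + 1) =>
              ι R ((((Fin.cons (Pi.single k 1) (fun t => A (r t)) : Fin (n + 1) → (Fin (n + 1) → R)) s),
                (0 : Fin (n + 1) → R)) : ((Fin (n + 1) → R) × (Fin (n + 1) → R)))).prod *
             (List.ofFn fun s : Fin (n + 1) =>
              ι R (((0 : Fin (n + 1) → R), (Pi.single ((Fin.cons k r : Fin (n + 1) → Fin (n + 1)) s) 1 : Fin (n + 1) → R))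
                : ((Fin (n + 1) → R) × (Fin (n + 1) → R)))).prod) := FermionAux.ferm_regroup _ _
      _ = ((-1 : ℤ) ^ (n + 1).choose 2) •
            (G (Fin.cons (Pi.single k 1) (fun t => A (r t))) *
             H (fun s => (Pi.single ((Fin.cons k r : Fin (n + 1) → Fin (n + 1)) s) 1 : Fin (n + 1) → R))) := by
          rw [hGapp, hHapp]
      _ = ((-1 : ℤ) ^ (n + 1).choose 2) •
            ((e.det (Fin.cons (Pi.single k 1) (fun t => A (r t))) • G ⇑e) *
             (e.det (fun s => (Pi.single ((Fin.cons k r : Fin (n + 1) → Fin (n + 1)) s) 1 : Fin (n + 1) → R))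
                • H ⇑e)) := by
          rw [← FermionAux.alt_eq_det_smul e G, ← FermionAux.alt_eq_det_smul e H]
      _ = (e.det (Fin.cons (Pi.single k 1) (fun t => A (r t))) *
            e.det (fun s => (Pi.single ((Fin.cons k r : Fin (n + 1) → Fin (n + 1)) s) 1 : Fin (n + 1) → R))) •
            Z := by
          rw [hZ]
          rw [smul_mul_assoc, mul_smul_comm, smul_smul]
          rw [smul_comm ((-1 : ℤ) ^ (n + 1).choose 2)]
  calc (∑ r : Fin n → Fin (n + 1), (fermionPsi (R := R) k * fermionPhi k) *
          (List.ofFn fun t => ι R (((A (r t) : Fin (n + 1) → R), (0 : Fin (n + 1) → R)) : ((Fin (n + 1) → R) × (Fin (n + 1) → R))) * fermionPhi (r t)).prod)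
      = ∑ r : Fin n → Fin (n + 1),
          (e.det (Fin.cons (Pi.single k 1) (fun t => A (r t))) *
            e.det (fun s => (Pi.single ((Fin.cons k r : Fin (n + 1) → Fin (n + 1)) s) 1
              : Fin (n + 1) → R))) • Z := Finset.sum_congr rfl fun r _ => hterm r
    _ = ((n.factorial : R) * (A.submatrix k.succAbove k.succAbove).det) • Z := by
        rw [he, ← Finset.sum_smul, FermionDet.sum_det_mul_det A k]
    _ = (Nat.factorial n : R) • (A.submatrix (Fin.succAbove k) (Fin.succAbove k)).det •
        ((List.finRange (n + 1)).map (fun i => fermionPsi (R := R) i * fermionPhi i)).prod := by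
        rw [hRHS, mul_smul]
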